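/- Let a, b, D be real numbers with a ≠ 0 and D > 0, and set c = b²/(4a) − a D². Let I ⊆ ℝ be a nonempty open interval and let Φ : I → ℝ be twice differentiable with Φ''(t) = a·Φ'(t)² + b·Φ'(t) + c for all t ∈ I, and suppose |Φ'(t₀) + b/(2a)| > D for some t₀ ∈ I. Then there exist ξ > 0 and κ ∈ ℝ such that for all t ∈ I one has ξ e^{2aDt} ≠ 1 and Φ(t) = −(1/a)·( log|1 − ξ e^{2aDt}| + (b/2 − Da)·t ) + κ. -/

import Mathlib

private lemma const_on_Ioo {x y : ℝ} {f : ℝ → ℝ} (h : ∀ t ∈ Set.Ioo x y, HasDerivAt f 0 t)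
    {s t : ℝ} (hs : s ∈ Set.Ioo x y) (ht : t ∈ Set.Ioo x y) : f s = f t := by
  apply (convex_Ioo x y).is_const_of_fderivWithin_eq_zero
    (fun z hz => ((h z hz).differentiableAt).differentiableWithinAt)
    (fun z hz => ?_) hs ht
  rw [fderivWithin_of_isOpen isOpen_Ioo hz, (h z hz).hasFDerivAt.fderiv]
  ext; simp

/-- uniqueness for Case 1b: any twice differentiable solution of
`Φ'' = aΦ'² + bΦ' + c` (with `c = b²/(4a) − aD²`) on a nonempty open interval
with `|Φ'(t₀) + b/(2a)| > D` for some `t₀` is of the Case 1b form. -/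
theorem stmt_10 (a b D : ℝ) (ha : a ≠ 0) (hD : 0 < D)
    (c : ℝ) (hc : c = b ^ 2 / (4 * a) - a * D ^ 2)
    (I : Set ℝ) (hI : I.Nonempty) (hIab : ∃ x y : ℝ, I = Set.Ioo x y)
    (Φ : ℝ → ℝ)
    (hΦ₁ : ∀ t ∈ I, DifferentiableAt ℝ Φ t)
    (hΦ₂ : ∀ t ∈ I, DifferentiableAt ℝ (deriv Φ) t)
    (hode : ∀ t ∈ I, deriv (deriv Φ) t = a * (deriv Φ t) ^ 2 + b * deriv Φ t + c)
    (hpt : ∃ t₀ ∈ I, D < |deriv Φ t₀ + b / (2 * a)|) :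
    ∃ ξ : ℝ, 0 < ξ ∧ ∃ κ : ℝ, ∀ t ∈ I,
      ξ * Real.exp (2 * a * D * t) ≠ 1 ∧
      Φ t = -(1 / a) * (Real.log |1 - ξ * Real.exp (2 * a * D * t)|
              + (b / 2 - D * a) * t) + κ := by
  obtain ⟨x, y, hxy⟩ := hIab
  subst hxy
  obtain ⟨t₀, ht₀, hψ₀⟩ := hpt
  set ψ : ℝ → ℝ := fun t => deriv Φ t + b / (2 * a) with hψdef
  -- ψ satisfies ψ' = a(ψ² - D²)
  have hψder : ∀ t ∈ Set.Ioo x y, HasDerivAt ψ (a * (ψ t ^ 2 - D ^ 2)) t := by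
    intro t ht
    have h1 : HasDerivAt (deriv Φ) (deriv (deriv Φ) t) t := (hΦ₂ t ht).hasDerivAt
    have h2 := h1.add_const (b / (2 * a))
    refine h2.congr_deriv ?_
    symm
    rw [hode t ht, hc, hψdef]
    field_simp
    ring
  -- the energy E = (ψ² - D²) e^{-(2aΦ + bt)} is constant
  set E : ℝ → ℝ := fun t => (ψ t ^ 2 - D ^ 2) * Real.exp (-(2 * a * Φ t + b * t)) with hEdef
  have hEder : ∀ t ∈ Set.Ioo x y, HasDerivAt E 0 t := by
    intro t ht
    have h1 : HasDerivAt (fun t => ψ t ^ 2 - D ^ 2)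
        (2 * ψ t ^ 1 * (a * (ψ t ^ 2 - D ^ 2))) t := ((hψder t ht).pow 2).sub_const _
    have h2 : HasDerivAt (fun t => -(2 * a * Φ t + b * t))
        (-(2 * a * deriv Φ t + b * 1)) t :=
      ((((hΦ₁ t ht).hasDerivAt.const_mul (2 * a)).add
        ((hasDerivAt_id t).const_mul b)).neg)
    have h3 := h1.mul h2.exp
    refine h3.congr_deriv ?_
    symm
    have hψt : deriv Φ t = ψ t - b / (2 * a) := by rw [hψdef]; ring
    rw [hψt]
    field_simp
    ring
  have hEconst : ∀ t ∈ Set.Ioo x y, E t = E t₀ := fun t ht => const_on_Ioo hEder ht ht₀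
  have hE₀ : 0 < E t₀ := by
    have h1 : D ^ 2 < ψ t₀ ^ 2 := by nlinarith [sq_abs (ψ t₀), abs_nonneg (ψ t₀)]
    have h2 := Real.exp_pos (-(2 * a * Φ t₀ + b * t₀))
    rw [hEdef]
    exact mul_pos (by linarith) h2
  -- hence ψ² > D² everywhere on I
  have hpos : ∀ t ∈ Set.Ioo x y, 0 < ψ t ^ 2 - D ^ 2 := by
    intro t ht
    have h3 : 0 < E t := (hEconst t ht) ▸ hE₀
    rw [hEdef] at h3
    have h2 := Real.exp_pos (-(2 * a * Φ t + b * t))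
    rcases mul_pos_iff.mp h3 with ⟨h4, _⟩ | ⟨_, h5⟩
    · exact h4
    · linarith
  have hneD : ∀ t ∈ Set.Ioo x y, ψ t + D ≠ 0 := by
    intro t ht h
    have := hpos t ht
    nlinarith
  -- G = (ψ - D)/(ψ + D) · e^{-2aDt} is constant
  set G : ℝ → ℝ := fun t => (ψ t - D) / (ψ t + D) * Real.exp (-(2 * a * D * t)) with hGdef
  have hGder : ∀ t ∈ Set.Ioo x y, HasDerivAt G 0 t := by
    intro t ht
    have h1 : HasDerivAt (fun t => (ψ t - D) / (ψ t + D))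
        ((a * (ψ t ^ 2 - D ^ 2) * (ψ t + D) - (ψ t - D) * (a * (ψ t ^ 2 - D ^ 2)))
          / (ψ t + D) ^ 2) t :=
      ((hψder t ht).sub_const D).div ((hψder t ht).add_const D) (hneD t ht)
    have h2 : HasDerivAt (fun t => Real.exp (-(2 * a * D * t)))
        (Real.exp (-(2 * a * D * t)) * (-(2 * a * D * 1))) t :=
      HasDerivAt.exp (((hasDerivAt_id t).const_mul (2 * a * D)).neg)
    have h3 := h1.mul h2
    refine h3.congr_deriv ?_
    symm
    have hne := hneD t ht
    field_simp
    ring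
  set ξ : ℝ := G t₀ with hξdef
  have hGconst : ∀ t ∈ Set.Ioo x y, G t = ξ := fun t ht => const_on_Ioo hGder ht ht₀
  have hξpos : 0 < ξ := by
    have h1 : 0 < (ψ t₀ - D) / (ψ t₀ + D) := by
      have h2 : (ψ t₀ - D) / (ψ t₀ + D) = (ψ t₀ ^ 2 - D ^ 2) / (ψ t₀ + D) ^ 2 := by
        have := hneD t₀ ht₀
        field_simp
        ring
      rw [h2]
      have h3 := hpos t₀ ht₀
      have h4 := hneD t₀ ht₀
      positivity
    have := Real.exp_pos (-(2 * a * D * t₀))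
    rw [hξdef, hGdef]
    positivity
  refine ⟨ξ, hξpos, ?_⟩
  -- key relation: ψ(1 - ξE) = D(1 + ξE), with 1 - ξE ≠ 0
  have hkey : ∀ t ∈ Set.Ioo x y,
      ψ t * (1 - ξ * Real.exp (2 * a * D * t)) = D * (1 + ξ * Real.exp (2 * a * D * t)) ∧
      1 - ξ * Real.exp (2 * a * D * t) ≠ 0 := by
    intro t ht
    have h1 : (ψ t - D) / (ψ t + D) * Real.exp (-(2 * a * D * t)) = ξ := hGconst t ht
    have h1' : (ψ t - D) / (ψ t + D) = ξ * Real.exp (2 * a * D * t) := by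
      calc (ψ t - D) / (ψ t + D)
          = ((ψ t - D) / (ψ t + D) * Real.exp (-(2 * a * D * t)))
            * Real.exp (2 * a * D * t) := by
            rw [mul_assoc, ← Real.exp_add]; simp
        _ = ξ * Real.exp (2 * a * D * t) := by rw [h1]
    have h2 : (ψ t - D) = ξ * Real.exp (2 * a * D * t) * (ψ t + D) :=
      (div_eq_iff (hneD t ht)).mp h1'
    constructor
    · linarith [h2]
    · intro h
      have h4 : ξ * Real.exp (2 * a * D * t) = 1 := by linarith
      rw [h4] at h2
      nlinarith
  refine ⟨Φ t₀ - -(1 / a) * (Real.log (1 - ξ * Real.exp (2 * a * D * t₀))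
    + (b / 2 - D * a) * t₀), fun t ht => ?_⟩
  obtain ⟨hk1, hk2⟩ := hkey t ht
  have hneq1 : ξ * Real.exp (2 * a * D * t) ≠ 1 := by
    intro h; apply hk2; rw [h]; ring
  refine ⟨hneq1, ?_⟩
  -- Θ has derivative deriv Φ
  set Θ : ℝ → ℝ := fun t => -(1 / a) * (Real.log (1 - ξ * Real.exp (2 * a * D * t))
    + (b / 2 - D * a) * t) with hΘdef
  have hΘder : ∀ s ∈ Set.Ioo x y, HasDerivAt Θ (deriv Φ s) s := by
    intro s hs
    obtain ⟨hk1s, hk2s⟩ := hkey s hs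
    have h1 : HasDerivAt (fun s => 1 - ξ * Real.exp (2 * a * D * s))
        (-(ξ * (Real.exp (2 * a * D * s) * (2 * a * D * 1)))) s := by
      exact (((HasDerivAt.exp (((hasDerivAt_id s).const_mul (2 * a * D)))).const_mul ξ).const_sub 1)
    have h2 := h1.log hk2s
    have h3 := ((h2.add (((hasDerivAt_id s).const_mul (b / 2 - D * a)))).const_mul (-(1 / a)))
    refine h3.congr_deriv ?_
    symm
    have hψeq : ψ s = D * (1 + ξ * Real.exp (2 * a * D * s))
        / (1 - ξ * Real.exp (2 * a * D * s)) := by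
      rw [eq_div_iff hk2s]; linarith
    have hψs : deriv Φ s = ψ s - b / (2 * a) := by rw [hψdef]; ring
    rw [hψs, hψeq]
    generalize Real.exp (2 * a * D * s) = w at hk2s ⊢
    field_simp
    ring
  -- Φ - Θ is constant
  have hdiff : ∀ s ∈ Set.Ioo x y, HasDerivAt (fun s => Φ s - Θ s) 0 s := by
    intro s hs
    have := ((hΦ₁ s hs).hasDerivAt).sub (hΘder s hs)
    rw [sub_self] at this
    exact this
  have hconst : Φ t - Θ t = Φ t₀ - Θ t₀ := const_on_Ioo hdiff ht ht₀
  have habs : Real.log |1 - ξ * Real.exp (2 * a * D * t)|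
      = Real.log (1 - ξ * Real.exp (2 * a * D * t)) := Real.log_abs _
  rw [habs]
  rw [hΘdef] at hconst
  simp only at hconst
  linarith [hconst]
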